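/- ∫₀^{1/2} (1+2t³-2.5t) · 16t(1+t²)/(π((1+t²)²-4t²)²) dt = (4/π)(35/27 - ln 3), and this value is less than 0.26. -/

import Mathlib

open Real

noncomputable def Fant (t : ℝ) : ℝ :=
  (4 * Real.log (1 - t) - 4 * Real.log (1 + t) - 12 / (t - 1) - 12 / (t + 1)
    - 7 / (2 * (t - 1) ^ 2) + 7 / (2 * (t + 1) ^ 2)
    - 1 / (3 * (t - 1) ^ 3) + 1 / (t + 1) ^ 3) / π

lemma log3_gt : (1.0922 : ℝ) < Real.log 3 := by
  rw [Real.lt_log_iff_exp_lt (by norm_num)]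
  have h1 : Real.exp 1 < 2.7182818286 := Real.exp_one_lt_d9
  have h2 : Real.exp 0.0922 < 1.1016 := by
    have h3 : (1 : ℝ) - 0.0922 < Real.exp (-0.0922) := by
      have := Real.add_one_lt_exp (x := (-0.0922 : ℝ)) (by norm_num)
      linarith
    have h4 : Real.exp 0.0922 = (Real.exp (-0.0922))⁻¹ := by
      rw [← Real.exp_neg]; norm_num
    rw [h4]
    have hpos : (0:ℝ) < 1 - 0.0922 := by norm_num
    calc (Real.exp (-0.0922))⁻¹ < ((1:ℝ) - 0.0922)⁻¹ := by
          exact inv_strictAnti₀ hpos h3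
      _ < 1.1016 := by norm_num
  have : Real.exp 1.0922 = Real.exp 1 * Real.exp 0.0922 := by
    rw [← Real.exp_add]; norm_num
  have hub : Real.exp 1.0922 < 3 := by
    rw [this]
    calc Real.exp 1 * Real.exp 0.0922 < 2.7182818286 * 1.1016 := by
          apply mul_lt_mul' (le_of_lt h1) h2 (le_of_lt (Real.exp_pos _)) (by norm_num)
      _ < 3 := by norm_num
  exact hub

theorem integral_Q_at_one :
    (∫ t in (0:ℝ)..(1 / 2),
        (1 + 2 * t ^ 3 - 2.5 * t) * (16 * t * (1 + t ^ 2) /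
          (π * ((1 + t ^ 2) ^ 2 - 4 * t ^ 2) ^ 2))) =
      (4 / π) * (35 / 27 - Real.log 3) ∧
    (4 / π) * (35 / 27 - Real.log 3) < 0.26 := by
  constructor
  · have key : ∀ x ∈ Set.uIcc (0:ℝ) (1/2), HasDerivAt Fant
        ((1 + 2 * x ^ 3 - 2.5 * x) * (16 * x * (1 + x ^ 2) /
          (π * ((1 + x ^ 2) ^ 2 - 4 * x ^ 2) ^ 2))) x := by
      intro x hx
      rw [Set.uIcc_of_le (by norm_num)] at hx
      obtain ⟨hx0, hx2⟩ := hx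
      have hm : x - 1 ≠ 0 := by intro h; linarith
      have hp : x + 1 ≠ 0 := by intro h; linarith
      have h1m : (1:ℝ) - x ≠ 0 := by intro h; linarith
      have h1p : (1:ℝ) + x ≠ 0 := by intro h; linarith
      have d1 : HasDerivAt (fun t : ℝ => Real.log (1 - t)) (-1 / (1 - x)) x := by
        have := ((hasDerivAt_id x).const_sub 1).log h1m
        simpa using this
      have d2 : HasDerivAt (fun t : ℝ => Real.log (1 + t)) (1 / (1 + x)) x := by
        have := ((hasDerivAt_id x).const_add 1).log h1p
        simpa using this
      have d3 := (hasDerivAt_const x (12:ℝ)).div ((hasDerivAt_id x).sub_const 1) hm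
      have d4 := (hasDerivAt_const x (12:ℝ)).div ((hasDerivAt_id x).add_const 1) hp
      have d5 := (hasDerivAt_const x (7:ℝ)).div
        ((((hasDerivAt_id x).sub_const 1).pow 2).const_mul 2)
        (mul_ne_zero two_ne_zero (pow_ne_zero 2 hm))
      have d6 := (hasDerivAt_const x (7:ℝ)).div
        ((((hasDerivAt_id x).add_const 1).pow 2).const_mul 2)
        (mul_ne_zero two_ne_zero (pow_ne_zero 2 hp))
      have d7 := (hasDerivAt_const x (1:ℝ)).div
        ((((hasDerivAt_id x).sub_const 1).pow 3).const_mul 3)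
        (mul_ne_zero three_ne_zero (pow_ne_zero 3 hm))
      have d8 := (hasDerivAt_const x (1:ℝ)).div
        (((hasDerivAt_id x).add_const 1).pow 3)
        (pow_ne_zero 3 hp)
      have D := (((((((d1.const_mul (4:ℝ)).sub (d2.const_mul 4)).sub d3).sub d4).sub
        d5).add d6).sub d7).add d8 |>.div_const π
      refine D.congr_deriv ?_
      have hπ := Real.pi_ne_zero
      have hden : ((1 + x ^ 2) ^ 2 - 4 * x ^ 2) ≠ 0 := by nlinarith
      simp only [id, Pi.pow_apply]
      field_simp
      ring
    have hcont : ContinuousOn (fun t : ℝ =>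
        (1 + 2 * t ^ 3 - 2.5 * t) * (16 * t * (1 + t ^ 2) /
          (π * ((1 + t ^ 2) ^ 2 - 4 * t ^ 2) ^ 2))) (Set.uIcc (0:ℝ) (1/2)) := by
      apply ContinuousOn.mul (by fun_prop)
      apply ContinuousOn.div (by fun_prop) (by fun_prop)
      intro t ht
      rw [Set.uIcc_of_le (by norm_num)] at ht
      obtain ⟨h0, h2⟩ := ht
      have hne : (1 + t ^ 2) ^ 2 - 4 * t ^ 2 ≠ 0 := by nlinarith
      exact mul_ne_zero Real.pi_ne_zero (pow_ne_zero 2 hne)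
    rw [intervalIntegral.integral_eq_sub_of_hasDerivAt key
      (hcont.intervalIntegrable)]
    have e1 : Real.log (1 - 1/2 : ℝ) = -Real.log 2 := by
      rw [show (1 - 1/2 : ℝ) = 2⁻¹ by norm_num, Real.log_inv]
    have e2 : Real.log (1 + 1/2 : ℝ) = Real.log 3 - Real.log 2 := by
      rw [show (1 + 1/2 : ℝ) = 3/2 by norm_num, Real.log_div (by norm_num) (by norm_num)]
    simp only [Fant, e1, e2]
    norm_num
    field_simp
    ring
  · have hπ := Real.pi_gt_d6
    have hπ0 := Real.pi_pos
    have hl := log3_gt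
    rw [div_mul_eq_mul_div, div_lt_iff₀ hπ0]
    norm_num
    nlinarith
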